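/- If G is a complete k-partite graph in which every partite set has size greater than 1, then ρ_T(G) = k. -/
import Mathlib


/-- A min-plus `k`-tropical dot product representation of `G` with threshold `t`:
distinct vertices `x, y` are adjacent iff `min_{1 ≤ i ≤ k} (f(x)_i + f(y)_i) ≥ t`
(equivalently, every coordinate sum is at least `t`). -/
def MinPlusRep {V : Type*} (G : SimpleGraph V) (k : ℕ) (f : V → Fin k → ℝ) (t : ℝ) : Prop :=
  0 < t ∧ ∀ x y : V, x ≠ y → (G.Adj x y ↔ ∀ i : Fin k, t ≤ f x i + f y i)

/-- The min-plus tropical dot product dimension `ρ_T(G)`. -/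
noncomputable def rhoT {V : Type*} (G : SimpleGraph V) : ℕ :=
  sInf {k : ℕ | 0 < k ∧ ∃ (f : V → Fin k → ℝ) (t : ℝ), MinPlusRep G k f t}

/-- If `G` is a complete `k`-partite graph all of whose parts have size greater than 1,
then `ρ_T(G) = k`. -/
theorem stmt_16 {V : Type*} [Fintype V] [Nonempty V] (G : SimpleGraph V) (k : ℕ)
    (P : V → Fin k) (hparts : ∀ i : Fin k, 1 < Fintype.card {x : V // P x = i})
    (hadj : ∀ x y : V, G.Adj x y ↔ P x ≠ P y) :
    rhoT G = k := by
  have hk : 0 < k := (P (Classical.arbitrary V)).pos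
  -- the representation witnessing k
  have hmem : k ∈ {k : ℕ | 0 < k ∧ ∃ (f : V → Fin k → ℝ) (t : ℝ), MinPlusRep G k f t} := by
    refine ⟨hk, fun x i => if P x = i then 0 else 1, 1, one_pos, fun x y hxy => ?_⟩
    rw [hadj]
    constructor
    · intro hne i
      by_cases hx : P x = i
      · have hy : P y ≠ i := fun h => hne (hx.trans h.symm)
        simp [hx, hy]
      · simp only [if_neg hx]
        by_cases hy : P y = i <;> simp [hy]
    · intro h
      intro heq
      have := h (P x)
      simp [heq.symm] at this
      linarith
  -- lower bound: every member of the set is ≥ k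
  have hlb : ∀ m ∈ {k : ℕ | 0 < k ∧ ∃ (f : V → Fin k → ℝ) (t : ℝ), MinPlusRep G k f t},
      k ≤ m := by
    rintro m ⟨-, f, t, ht, hrep⟩
    by_contra hlt
    push_neg at hlt
    -- pick two vertices in each part
    have hpick : ∀ j : Fin k, ∃ x y : V, P x = j ∧ P y = j ∧ x ≠ y := by
      intro j
      obtain ⟨⟨x, hx⟩, ⟨y, hy⟩, hne⟩ := Fintype.exists_pair_of_one_lt_card (hparts j)
      exact ⟨x, y, hx, hy, fun h => hne (by simp [Subtype.ext_iff, h])⟩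
    choose X Y hX hY hXY using hpick
    -- for each part, a "bad" coordinate
    have hbad : ∀ j : Fin k, ∃ i : Fin m, f (X j) i + f (Y j) i < t := by
      intro j
      have hnadj : ¬ G.Adj (X j) (Y j) := by
        rw [hadj, hX, hY]; simp
      have := (hrep (X j) (Y j) (hXY j)).not.mp hnadj
      push_neg at this
      obtain ⟨i, hi⟩ := this
      exact ⟨i, by linarith⟩
    choose g hg using hbad
    have : ¬ Function.Injective g := by
      intro hinj
      have := Fintype.card_le_of_injective g hinj
      simp at this
      omega
    rw [Function.not_injective_iff] at this
    obtain ⟨j, j', hgj, hjj'⟩ := this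
    have hXne : X j ≠ X j' := fun h => hjj' (by rw [← hX j, ← hX j', h])
    have hYne : Y j ≠ Y j' := fun h => hjj' (by rw [← hY j, ← hY j', h])
    have hA1 : G.Adj (X j) (X j') := by rw [hadj, hX, hX]; exact hjj'
    have hA2 : G.Adj (Y j) (Y j') := by rw [hadj, hY, hY]; exact hjj'
    have h1 := ((hrep _ _ hXne).mp hA1) (g j)
    have h2 := ((hrep _ _ hYne).mp hA2) (g j)
    have h3 := hg j
    have h4 := hg j'
    rw [← hgj] at h4
    linarith [h1, h2, h3, h4]
  exact le_antisymm (Nat.sInf_le hmem) (le_csInf ⟨k, hmem⟩ hlb)
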